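/- Let X, Y and A be measurable spaces, μ a probability measure on X (the prior), η a Markov kernel from X to Y (the observation distribution), ν the induced marginal probability measure on Y, and κ a Markov kernel from Y to X (the posterior) satisfying the disintegration identity ∫_X ∫_Y f(x,y) dη_x(y) dμ(x) = ∫_Y ∫_X f(x,y) dκ_y(x) dν(y) for every bounded measurable f : X × Y → ℝ. Let ℓ : X × A → ℝ be a bounded measurable loss function. For a measurable decision rule d : Y → A define the Bayes risk BR(d) = ∫_X ∫_Y ℓ(x, d(y)) dη_x(y) dμ(x), and for each y ∈ Y define the set of Bayes acts A*(y) = {a ∈ A : ∫_X ℓ(x,a) dκ_y(x) ≤ ∫_X ℓ(x,a') dκ_y(x) for all a' ∈ A}. Assume there exists a measurable map d° : Y → A with d°(y) ∈ A*(y) for every y ∈ Y. Then a measurable decision rule d* : Y → A minimizes BR over all measurable decision rules if and only if d*(y) ∈ A*(y) for ν-almost all y ∈ Y. -/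
import Mathlib


open MeasureTheory ProbabilityTheory

/-- The Bayes risk of a decision rule `d : Y → A`. -/
noncomputable def BayesRisk {X Y A : Type*} [MeasurableSpace X] [MeasurableSpace Y]
    (μ : Measure X) (η : Kernel X Y) (ℓ : X × A → ℝ) (d : Y → A) : ℝ :=
  ∫ x, ∫ y, ℓ (x, d y) ∂(η x) ∂μ

/-- The set of Bayes acts at an observation `y`, under posterior kernel `κ`. -/
def BayesActs {X Y A : Type*} [MeasurableSpace X] [MeasurableSpace Y]
    (κ : Kernel Y X) (ℓ : X × A → ℝ) (y : Y) : Set A :=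
  {a : A | ∀ a' : A, ∫ x, ℓ (x, a) ∂(κ y) ≤ ∫ x, ℓ (x, a') ∂(κ y)}

theorem bayes_rule_iff_ae_bayes_act
    {X Y A : Type*} [MeasurableSpace X] [MeasurableSpace Y] [MeasurableSpace A]
    (μ : Measure X) [IsProbabilityMeasure μ]
    (η : Kernel X Y) [IsMarkovKernel η]
    (ν : Measure Y) [IsProbabilityMeasure ν]
    (κ : Kernel Y X) [IsMarkovKernel κ]
    (hdis : ∀ f : X × Y → ℝ, Measurable f → (∃ C, ∀ p, |f p| ≤ C) →
      ∫ x, ∫ y, f (x, y) ∂(η x) ∂μ = ∫ y, ∫ x, f (x, y) ∂(κ y) ∂ν)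
    (ℓ : X × A → ℝ) (hℓ : Measurable ℓ) (hℓbound : ∃ C, ∀ p, |ℓ p| ≤ C)
    (d₀ : Y → A) (hd₀ : Measurable d₀) (hd₀act : ∀ y, d₀ y ∈ BayesActs κ ℓ y)
    (dstar : Y → A) (hdstar : Measurable dstar) :
    (∀ d : Y → A, Measurable d → BayesRisk μ η ℓ dstar ≤ BayesRisk μ η ℓ d) ↔
      (∀ᵐ y ∂ν, dstar y ∈ BayesActs κ ℓ y) := by
  obtain ⟨C, hC⟩ := hℓbound
  set g : (Y → A) → Y → ℝ := fun d y => ∫ x, ℓ (x, d y) ∂(κ y) with hg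
  have hBR : ∀ d : Y → A, Measurable d → BayesRisk μ η ℓ d = ∫ y, g d y ∂ν := by
    intro d hd
    exact hdis (fun p => ℓ (p.1, d p.2))
      (hℓ.comp (measurable_fst.prodMk (hd.comp measurable_snd)))
      ⟨C, fun p => hC _⟩
  have hgmeas : ∀ d : Y → A, Measurable d → Measurable (g d) := by
    intro d hd
    have h1 : StronglyMeasurable (Function.uncurry fun (y : Y) (x : X) => ℓ (x, d y)) :=
      (hℓ.comp (measurable_snd.prodMk (hd.comp measurable_fst))).stronglyMeasurable
    exact h1.integral_kernel_prod_right.measurable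
  have hgbound : ∀ (d : Y → A) (y : Y), ‖g d y‖ ≤ C := by
    intro d y
    have := norm_integral_le_of_norm_le_const
      (μ := κ y) (f := fun x => ℓ (x, d y)) (C := C)
      (ae_of_all _ fun x => by simpa using hC (x, d y))
    simpa using this
  have hgi : ∀ d : Y → A, Measurable d → Integrable (g d) ν := by
    intro d hd
    exact (integrable_const C).mono' (hgmeas d hd).aestronglyMeasurable
      (ae_of_all _ fun y => hgbound d y)
  have hd₀le : ∀ (d : Y → A) (y : Y), g d₀ y ≤ g d y := fun d y => hd₀act y (d y)
  constructor
  · intro hmin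
    have h1 : ∫ y, g dstar y ∂ν ≤ ∫ y, g d₀ y ∂ν := by
      have := hmin d₀ hd₀
      rwa [hBR dstar hdstar, hBR d₀ hd₀] at this
    have hint : Integrable (fun y => g dstar y - g d₀ y) ν :=
      (hgi dstar hdstar).sub (hgi d₀ hd₀)
    have hnn : 0 ≤ᵐ[ν] fun y => g dstar y - g d₀ y :=
      ae_of_all _ fun y => sub_nonneg.2 (hd₀le dstar y)
    have hz : ∫ y, (g dstar y - g d₀ y) ∂ν = 0 := by
      rw [integral_sub (hgi dstar hdstar) (hgi d₀ hd₀)]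
      have h2 : 0 ≤ ∫ y, g dstar y ∂ν - ∫ y, g d₀ y ∂ν := by
        rw [← integral_sub (hgi dstar hdstar) (hgi d₀ hd₀)]
        exact integral_nonneg_of_ae hnn
      linarith
    have heq := (integral_eq_zero_iff_of_nonneg_ae hnn hint).mp hz
    filter_upwards [heq] with y hy a'
    have hgy : g dstar y = g d₀ y := by
      have : g dstar y - g d₀ y = 0 := hy
      linarith
    calc ∫ x, ℓ (x, dstar y) ∂(κ y) = g d₀ y := hgy
      _ ≤ ∫ x, ℓ (x, a') ∂(κ y) := hd₀act y a'
  · intro hae d hd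
    rw [hBR dstar hdstar, hBR d hd]
    refine integral_mono_ae (hgi dstar hdstar) (hgi d hd) ?_
    filter_upwards [hae] with y hy
    exact hy (d y)
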